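/- Let H be a quasi-bialgebra and A an object of the category of left-left Yetter–Drinfeld modules over H which is also a left H-module algebra. If the map λ : A # H → H ⊗ (A # H), λ(a # h) = T¹(t¹·a)⁽⁻¹⁾t²h₁ ⊗ (T²·(t¹·a)⁽⁰⁾ # T³t³h₂) (where Φ = T¹⊗T²⊗T³ and Φ⁻¹ = t¹⊗t²⊗t³) is an algebra map, then A is an algebra in the category of Yetter–Drinfeld modules; in particular λ_A(aa') = X¹(x¹Y¹·a)⁽⁻¹⁾x²(Y²·a')⁽⁻¹⁾Y³ ⊗ [X²·(x¹Y¹·a)⁽⁰⁾][X³x³·(Y²·a')⁽⁰⁾]. -/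

import Mathlib

open TensorProduct LinearMap

/-- A quasi-bialgebra in the sense of Drinfeld: an associative unital algebra `H` with algebra
maps `Δ : H → H ⊗ H` and `ε : H → k` and an invertible associator `Φ ∈ H ⊗ H ⊗ H` such that
`Δ` is quasi-coassociative (coassociative up to conjugation by `Φ`), `ε` is a counit, `Φ`
satisfies the pentagon identity and the counit conditions. -/
structure QuasiBialgebra (k H : Type*) [CommRing k] [Ring H] [Algebra k H] where
  comul : H →ₗ[k] H ⊗[k] H
  counit : H →ₗ[k] k
  assoc3 : (H ⊗[k] H) ⊗[k] H
  assoc3Inv : (H ⊗[k] H) ⊗[k] H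
  assoc3_mul_inv : assoc3 * assoc3Inv = 1
  inv_mul_assoc3 : assoc3Inv * assoc3 = 1
  comul_mul : ∀ x y : H, comul (x * y) = comul x * comul y
  comul_one : comul 1 = 1
  counit_mul : ∀ x y : H, counit (x * y) = counit x * counit y
  counit_one : counit 1 = 1
  quasi_coassoc : ∀ h : H,
    (TensorProduct.assoc k H H H).symm ((LinearMap.lTensor H comul) (comul h))
      = assoc3 * ((LinearMap.rTensor H comul) (comul h)) * assoc3Inv
  counit_comul : (TensorProduct.lid k H).toLinearMap ∘ₗ
      (LinearMap.rTensor H counit) ∘ₗ comul = LinearMap.id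
  comul_counit : (TensorProduct.rid k H).toLinearMap ∘ₗ
      (LinearMap.lTensor H counit) ∘ₗ comul = LinearMap.id
  pentagon :
    ((LinearMap.rTensor H (TensorProduct.assoc k H H H).symm.toLinearMap)
        ((TensorProduct.assoc k H (H ⊗[k] H) H).symm ((1 : H) ⊗ₜ[k] assoc3)))
      * ((LinearMap.rTensor H (TensorProduct.assoc k H H H).symm.toLinearMap)
          ((LinearMap.rTensor H (LinearMap.lTensor H comul)) assoc3))
      * (assoc3 ⊗ₜ[k] (1 : H))
    = ((TensorProduct.assoc k (H ⊗[k] H) H H).symm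
          ((LinearMap.lTensor (H ⊗[k] H) comul) assoc3))
      * ((LinearMap.rTensor H (LinearMap.rTensor H comul)) assoc3)
  counit_assoc3_1 : (LinearMap.rTensor H
      ((TensorProduct.lid k H).toLinearMap ∘ₗ LinearMap.rTensor H counit)) assoc3 = 1
  counit_assoc3_2 : (LinearMap.rTensor H
      ((TensorProduct.rid k H).toLinearMap ∘ₗ LinearMap.lTensor H counit)) assoc3 = 1
  counit_assoc3_3 : (TensorProduct.rid k (H ⊗[k] H))
      ((LinearMap.lTensor (H ⊗[k] H) counit) assoc3) = 1

/-- A quasi-Hopf algebra: a quasi-bialgebra together with an algebra anti-automorphism `S`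
and elements `α, β` satisfying `S(h₁)αh₂ = ε(h)α`, `h₁βS(h₂) = ε(h)β` and
`X¹βS(X²)αX³ = 1 = S(x¹)αx²βS(x³)`. -/
structure QuasiHopfAlgebra (k H : Type*) [CommRing k] [Ring H] [Algebra k H] extends
    QuasiBialgebra k H where
  antipode : H →ₗ[k] H
  antipode_bijective : Function.Bijective antipode
  antipode_mul : ∀ x y : H, antipode (x * y) = antipode y * antipode x
  antipode_one : antipode 1 = 1
  el_α : H
  el_β : H
  antipode_α : ∀ h : H,
    LinearMap.mul' k H ((LinearMap.rTensor H
        (LinearMap.mulRight k el_α ∘ₗ antipode)) (comul h)) = counit h • el_α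
  antipode_β : ∀ h : H,
    LinearMap.mul' k H ((LinearMap.lTensor H
        (LinearMap.mulLeft k el_β ∘ₗ antipode)) (comul h)) = counit h • el_β
  assoc3_antipode_1 :
    LinearMap.mul' k H ((LinearMap.rTensor H (LinearMap.mul' k H ∘ₗ
        TensorProduct.map (LinearMap.mulRight k el_β)
          (LinearMap.mulRight k el_α ∘ₗ antipode))) assoc3) = 1
  assoc3_antipode_2 :
    LinearMap.mul' k H ((LinearMap.lTensor H antipode)
      ((LinearMap.rTensor H (LinearMap.mul' k H ∘ₗ
        TensorProduct.map (LinearMap.mulRight k el_α ∘ₗ antipode)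
          (LinearMap.mulRight k el_β))) assoc3Inv)) = 1
section AuxYD

variable {k : Type*} [CommRing k]

lemma myexists_rep2 {M N : Type*} [AddCommGroup M] [Module k M] [AddCommGroup N]
    [Module k N] (z : M ⊗[k] N) :
    ∃ (n : ℕ) (u : Fin n → M) (v : Fin n → N), z = ∑ i, u i ⊗ₜ[k] v i := by
  induction z using TensorProduct.induction_on with
  | zero => exact ⟨0, ![], ![], by simp⟩
  | tmul m n => exact ⟨1, fun _ => m, fun _ => n, by simp⟩
  | add x y hx hy =>
    obtain ⟨n, u, v, h⟩ := hx
    obtain ⟨n', u', v', h'⟩ := hy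
    refine ⟨n + n', Fin.append u u', Fin.append v v', ?_⟩
    rw [h, h', Fin.sum_univ_add]
    simp [Fin.append_left, Fin.append_right]

lemma myexists_rep3 {M N P : Type*} [AddCommGroup M] [Module k M] [AddCommGroup N]
    [Module k N] [AddCommGroup P] [Module k P] (z : (M ⊗[k] N) ⊗[k] P) :
    ∃ (n : ℕ) (u : Fin n → M) (v : Fin n → N) (w : Fin n → P),
      z = ∑ i, (u i ⊗ₜ[k] v i) ⊗ₜ[k] w i := by
  induction z using TensorProduct.induction_on with
  | zero => exact ⟨0, ![], ![], ![], by simp⟩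
  | tmul m p =>
    obtain ⟨n, u, v, h⟩ := myexists_rep2 m
    exact ⟨n, u, v, fun _ => p, by rw [h, TensorProduct.sum_tmul]⟩
  | add x y hx hy =>
    obtain ⟨n, u, v, w, h⟩ := hx
    obtain ⟨n', u', v', w', h'⟩ := hy
    refine ⟨n + n', Fin.append u u', Fin.append v v', Fin.append w w', ?_⟩
    rw [h, h', Fin.sum_univ_add]
    simp [Fin.append_left, Fin.append_right]

lemma myexists_rep2_family {ι : Type*} [Fintype ι] {M N : Type*} [AddCommGroup M]
    [Module k M] [AddCommGroup N] [Module k N] (e : ι → M ⊗[k] N) :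
    ∃ (K : ℕ) (u : ι → Fin K → M) (v : ι → Fin K → N),
      ∀ i, e i = ∑ r, u i r ⊗ₜ[k] v i r := by
  choose n u v h using fun i => myexists_rep2 (e i)
  refine ⟨Finset.univ.sup n,
    fun i r => if hr : (r : ℕ) < n i then u i ⟨r, hr⟩ else 0,
    fun i r => if hr : (r : ℕ) < n i then v i ⟨r, hr⟩ else 0, fun i => ?_⟩
  have hle : n i ≤ Finset.univ.sup n := Finset.le_sup (Finset.mem_univ i)
  rw [h i]
  rw [Fin.sum_univ_eq_sum_range
    (fun j => (if hr : j < n i then u i ⟨j, hr⟩ else 0) ⊗ₜ[k]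
      (if hr : j < n i then v i ⟨j, hr⟩ else 0))]
  rw [← Finset.sum_subset (Finset.range_subset_range.mpr hle)
    (fun x _ hx => by
      have : ¬ x < n i := by simpa using hx
      simp [this])]
  rw [← Fin.sum_univ_eq_sum_range
    (fun j => (if hr : j < n i then u i ⟨j, hr⟩ else 0) ⊗ₜ[k]
      (if hr : j < n i then v i ⟨j, hr⟩ else 0)) (n i)]
  apply Finset.sum_congr rfl
  intro j _
  simp [j.isLt]

lemma mysum_smul_map {M Q : Type*} [AddCommGroup M] [Module k M] [AddCommGroup Q]
    [Module k Q] (g : M →ₗ[k] Q) {n : ℕ} (c : Fin n → k) (x : Fin n → M) {e : M}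
    (he : ∑ i, c i • x i = e) : ∑ i, c i • g (x i) = g e := by
  rw [← he, map_sum]; simp

lemma mysum_map {M Q : Type*} [AddCommGroup M] [Module k M] [AddCommGroup Q]
    [Module k Q] (g : M →ₗ[k] Q) {ι : Type*} [Fintype ι] (x : ι → M) {e : M}
    (he : ∑ i, x i = e) : ∑ i, g (x i) = g e := by
  rw [← he, map_sum]

variable {H : Type*} [Ring H] [Algebra k H]

lemma mymulRight_add (a b : H) :
    LinearMap.mulRight k (a + b) = LinearMap.mulRight k a + LinearMap.mulRight k b := by
  ext x; simp [mul_add]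

lemma mymulRight_smul (c : k) (a : H) :
    LinearMap.mulRight k (c • a) = c • LinearMap.mulRight k a := by
  ext x; simp [mul_smul_comm]

/-- apply the counit to the second factor. -/
noncomputable def piMap {A : Type*} [AddCommGroup A] [Module k A] (ε : H →ₗ[k] k) :
    A ⊗[k] H →ₗ[k] A :=
  (TensorProduct.rid k A).toLinearMap ∘ₗ LinearMap.lTensor A ε

@[simp] lemma piMap_tmul {A : Type*} [AddCommGroup A] [Module k A] (ε : H →ₗ[k] k)
    (b : A) (h : H) : _root_.piMap ε (b ⊗ₜ[k] h) = ε h • b := by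
  simp [_root_.piMap]

/-- apply the counit to the third factor. -/
noncomputable def qMap (ε : H →ₗ[k] k) : (H ⊗[k] H) ⊗[k] H →ₗ[k] H ⊗[k] H :=
  (TensorProduct.rid k (H ⊗[k] H)).toLinearMap ∘ₗ LinearMap.lTensor (H ⊗[k] H) ε

@[simp] lemma qMap_tmul (ε : H →ₗ[k] k) (m : H ⊗[k] H) (w : H) :
    qMap ε (m ⊗ₜ[k] w) = ε w • m := by
  simp [qMap]

lemma qMap_mul (ε : H →ₗ[k] k) (hm : ∀ x y : H, ε (x * y) = ε x * ε y)
    (z z' : (H ⊗[k] H) ⊗[k] H) : qMap ε (z * z') = qMap ε z * qMap ε z' := by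
  induction z using TensorProduct.induction_on with
  | zero => simp
  | add u v hu hv => rw [add_mul, map_add, hu, hv, map_add, add_mul]
  | tmul m w =>
    induction z' using TensorProduct.induction_on with
    | zero => simp
    | add u v hu hv => rw [mul_add, map_add, hu, hv, map_add, mul_add]
    | tmul m' w' =>
      rw [Algebra.TensorProduct.tmul_mul_tmul, qMap_tmul, qMap_tmul, qMap_tmul, hm,
        smul_mul_smul_comm]

end AuxYD


set_option maxHeartbeats 2000000 in
set_option synthInstance.maxHeartbeats 1000000 in
/-- Let `H` be a quasi-bialgebra and `A` a left-left Yetter–Drinfeld module over `H` which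
is also a left `H`-module algebra.  If the map
`λ(a # h) = T¹(t¹·a)⁽⁻¹⁾t²h₁ ⊗ (T²·(t¹·a)⁽⁰⁾ # T³t³h₂)` on the smash product `A # H` is an
algebra map, then `A` is an algebra in the category of Yetter–Drinfeld modules; in particular
`λ_A(aa') = X¹(x¹Y¹·a)⁽⁻¹⁾x²(Y²·a')⁽⁻¹⁾Y³ ⊗ [X²·(x¹Y¹·a)⁽⁰⁾][X³x³·(Y²·a')⁽⁰⁾]`.
All Sweedler sums are expressed through arbitrary finite representations of the tensors
involved. -/
theorem quasiBialgebra_smash_coaction_algebra_map_implies_YD_algebra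
    {k H : Type*} [CommRing k] [Ring H] [Algebra k H]
    (W : QuasiBialgebra k H) {A : Type*} [AddCommGroup A] [Module k A]
    (mulA : A →ₗ[k] A →ₗ[k] A) (oneA : A)
    (act : H →ₗ[k] A →ₗ[k] A) (coact : A →ₗ[k] H ⊗[k] A)
    -- `A` is a left `H`-module:
    (hact_mul : ∀ (h h' : H) (a : A), act (h * h') a = act h (act h' a))
    (hact_one : ∀ a : A, act 1 a = a)
    -- `A` is a left `H`-module algebra (quasi-associative multiplication):
    (hma_assoc : ∀ (a a' a'' : A) (n : ℕ) (X1 X2 X3 : Fin n → H),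
      W.assoc3 = ∑ i, (X1 i ⊗ₜ[k] X2 i) ⊗ₜ[k] X3 i →
      mulA (mulA a a') a''
        = ∑ i, mulA (act (X1 i) a) (mulA (act (X2 i) a') (act (X3 i) a'')))
    (hma_mul : ∀ (h : H) (a a' : A) (n : ℕ) (h1 h2 : Fin n → H),
      W.comul h = ∑ i, h1 i ⊗ₜ[k] h2 i →
      act h (mulA a a') = ∑ i, mulA (act (h1 i) a) (act (h2 i) a'))
    (hma_one : ∀ h : H, act h oneA = W.counit h • oneA)
    (hA_one_mul : ∀ a : A, mulA oneA a = a)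
    (hA_mul_one : ∀ a : A, mulA a oneA = a)
    -- `A` is a left-left Yetter–Drinfeld module over `H`:
    (hyd_counit : ∀ (a : A) (N : ℕ) (a1 : Fin N → H) (a0 : Fin N → A),
      coact a = ∑ i, a1 i ⊗ₜ[k] a0 i → ∑ i, W.counit (a1 i) • a0 i = a)
    (hyd3 : ∀ (h : H) (a : A) (n N K : ℕ) (h1 h2 : Fin n → H)
        (p1 : Fin n → Fin K → H) (p0 : Fin n → Fin K → A)
        (a1 : Fin N → H) (a0 : Fin N → A),
      W.comul h = ∑ i, h1 i ⊗ₜ[k] h2 i →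
      (∀ i, coact (act (h1 i) a) = ∑ r, p1 i r ⊗ₜ[k] p0 i r) →
      coact a = ∑ j, a1 j ⊗ₜ[k] a0 j →
      ∑ i, ∑ r, (p1 i r * h2 i) ⊗ₜ[k] p0 i r
        = ∑ i, ∑ j, (h1 i * a1 j) ⊗ₜ[k] act (h2 i) (a0 j))
    (hyd1 : ∀ (a : A) (nX nY N K L : ℕ)
        (X1 X2 X3 : Fin nX → H) (Y1 Y2 Y3 : Fin nY → H)
        (a1 : Fin N → H) (a0 : Fin N → A)
        (c1 : Fin nX → Fin N → Fin K → H) (c0 : Fin nX → Fin N → Fin K → A)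
        (d1 : Fin nY → Fin K → H) (d0 : Fin nY → Fin K → A)
        (g1 g2 : Fin nY → Fin K → Fin L → H),
      W.assoc3 = ∑ i, (X1 i ⊗ₜ[k] X2 i) ⊗ₜ[k] X3 i →
      W.assoc3 = ∑ l, (Y1 l ⊗ₜ[k] Y2 l) ⊗ₜ[k] Y3 l →
      coact a = ∑ j, a1 j ⊗ₜ[k] a0 j →
      (∀ i j, coact (act (X2 i) (a0 j)) = ∑ r, c1 i j r ⊗ₜ[k] c0 i j r) →
      (∀ l, coact (act (Y1 l) a) = ∑ s, d1 l s ⊗ₜ[k] d0 l s) →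
      (∀ l s, W.comul (d1 l s) = ∑ t, g1 l s t ⊗ₜ[k] g2 l s t) →
      ∑ i, ∑ j, ∑ r, ((X1 i * a1 j) ⊗ₜ[k] (c1 i j r * X3 i)) ⊗ₜ[k] c0 i j r
        = ∑ l, ∑ s, ∑ t, ∑ i,
            ((X1 i * g1 l s t * Y2 l) ⊗ₜ[k] (X2 i * g2 l s t * Y3 l)) ⊗ₜ[k]
              act (X3 i) (d0 l s))
    -- the smash product multiplication `(a # h)(a' # h') = (x¹·a)(x²h₁·a') # x³h₂h'`:
    (msm : (A ⊗[k] H) →ₗ[k] (A ⊗[k] H) →ₗ[k] (A ⊗[k] H))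
    (hmsm : ∀ (a a' : A) (h h' : H) (n p : ℕ) (x1 x2 x3 : Fin n → H) (h1 h2 : Fin p → H),
      W.assoc3Inv = ∑ i, (x1 i ⊗ₜ[k] x2 i) ⊗ₜ[k] x3 i →
      W.comul h = ∑ j, h1 j ⊗ₜ[k] h2 j →
      msm (a ⊗ₜ[k] h) (a' ⊗ₜ[k] h')
        = ∑ i, ∑ j, mulA (act (x1 i) a) (act (x2 i * h1 j) a')
            ⊗ₜ[k] (x3 i * h2 j * h'))
    -- the map `λ(a # h) = T¹(t¹·a)⁽⁻¹⁾t²h₁ ⊗ (T²·(t¹·a)⁽⁰⁾ # T³t³h₂)`: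
    (lamsm : (A ⊗[k] H) →ₗ[k] H ⊗[k] (A ⊗[k] H))
    (hlamsm : ∀ (a : A) (h : H) (nT nt p K : ℕ)
        (T1 T2 T3 : Fin nT → H) (t1 t2 t3 : Fin nt → H) (h1 h2 : Fin p → H)
        (c1 : Fin nt → Fin K → H) (c0 : Fin nt → Fin K → A),
      W.assoc3 = ∑ i, (T1 i ⊗ₜ[k] T2 i) ⊗ₜ[k] T3 i →
      W.assoc3Inv = ∑ i, (t1 i ⊗ₜ[k] t2 i) ⊗ₜ[k] t3 i →
      W.comul h = ∑ j, h1 j ⊗ₜ[k] h2 j →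
      (∀ i, coact (act (t1 i) a) = ∑ r, c1 i r ⊗ₜ[k] c0 i r) →
      lamsm (a ⊗ₜ[k] h)
        = ∑ i, ∑ i', ∑ r, ∑ j, (T1 i * c1 i' r * t2 i' * h1 j) ⊗ₜ[k]
            (act (T2 i) (c0 i' r) ⊗ₜ[k] (T3 i * t3 i' * h2 j)))
    -- ... which is assumed to be an algebra map:
    (hlam_alg : ∀ x y : A ⊗[k] H,
      lamsm (msm x y)
        = (TensorProduct.map (LinearMap.mul' k H) (TensorProduct.lift msm))
            ((TensorProduct.tensorTensorTensorComm k H (A ⊗[k] H) H (A ⊗[k] H))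
              (lamsm x ⊗ₜ[k] lamsm y)))
    (hlam_one : lamsm (oneA ⊗ₜ[k] (1 : H)) = (1 : H) ⊗ₜ[k] (oneA ⊗ₜ[k] (1 : H))) :
    -- conclusion: `A` is an algebra in the category of Yetter–Drinfeld modules:
    coact oneA = (1 : H) ⊗ₜ[k] oneA ∧
    (∀ (a a' : A) (nX nx nY K L : ℕ)
        (X1 X2 X3 : Fin nX → H) (x1 x2 x3 : Fin nx → H) (Y1 Y2 Y3 : Fin nY → H)
        (c1 : Fin nx → Fin nY → Fin K → H) (c0 : Fin nx → Fin nY → Fin K → A)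
        (d1 : Fin nY → Fin L → H) (d0 : Fin nY → Fin L → A),
      W.assoc3 = ∑ i, (X1 i ⊗ₜ[k] X2 i) ⊗ₜ[k] X3 i →
      W.assoc3Inv = ∑ j, (x1 j ⊗ₜ[k] x2 j) ⊗ₜ[k] x3 j →
      W.assoc3 = ∑ l, (Y1 l ⊗ₜ[k] Y2 l) ⊗ₜ[k] Y3 l →
      (∀ j l, coact (act (x1 j * Y1 l) a) = ∑ r, c1 j l r ⊗ₜ[k] c0 j l r) →
      (∀ l, coact (act (Y2 l) a') = ∑ s, d1 l s ⊗ₜ[k] d0 l s) →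
      coact (mulA a a')
        = ∑ i, ∑ j, ∑ l, ∑ r, ∑ s,
            (X1 i * c1 j l r * x2 j * d1 l s * Y3 l) ⊗ₜ[k]
              mulA (act (X2 i) (c0 j l r)) (act (X3 i * x3 j) (d0 l s))) := by
  classical
  obtain ⟨nT, T1, T2, T3, hT⟩ := myexists_rep3 W.assoc3
  obtain ⟨nt, t1, t2, t3, ht⟩ := myexists_rep3 W.assoc3Inv
  -- counit collapse facts
  have hC1 : ∀ (n : ℕ) (u v w : Fin n → H),
      W.assoc3 = ∑ i, (u i ⊗ₜ[k] v i) ⊗ₜ[k] w i →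
      ∑ i, W.counit (w i) • (u i ⊗ₜ[k] v i) = (1 : H ⊗[k] H) := by
    intro n u v w hrep
    have h0 := W.counit_assoc3_3
    rw [hrep] at h0
    simpa [map_sum] using h0
  have hQ1 : qMap W.counit W.assoc3 = 1 := by
    simpa [qMap] using W.counit_assoc3_3
  have hQi : qMap W.counit W.assoc3Inv = 1 := by
    have hm := congrArg (qMap W.counit) W.inv_mul_assoc3
    rw [qMap_mul W.counit W.counit_mul, hQ1, mul_one] at hm
    simpa [Algebra.TensorProduct.one_def, W.counit_one] using hm
  have hC2 : ∀ (n : ℕ) (u v w : Fin n → H),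
      W.assoc3Inv = ∑ i, (u i ⊗ₜ[k] v i) ⊗ₜ[k] w i →
      ∑ i, W.counit (w i) • (u i ⊗ₜ[k] v i) = (1 : H ⊗[k] H) := by
    intro n u v w hrep
    have h0 := hQi
    rw [hrep] at h0
    simpa [map_sum] using h0
  have hCc : ∀ (h : H) (n : ℕ) (h1 h2 : Fin n → H),
      W.comul h = ∑ i, h1 i ⊗ₜ[k] h2 i → ∑ i, W.counit (h2 i) • h1 i = h := by
    intro h n h1 h2 hrep
    have h0 : (TensorProduct.rid k H) ((LinearMap.lTensor H W.counit) (W.comul h)) = h := by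
      have := LinearMap.congr_fun W.comul_counit h
      simpa using this
    rw [hrep] at h0
    simpa [map_sum] using h0
  have hcomul1 : W.comul (1 : H) = ∑ _i : Fin 1, (1 : H) ⊗ₜ[k] (1 : H) := by
    simp [W.comul_one, Algebra.TensorProduct.one_def]
  -- the key formula for `(id ⊗ (id ⊗ ε)) ∘ λ`
  have hB' : ∀ (b : A) (h : H),
      (LinearMap.lTensor H (_root_.piMap W.counit)) (lamsm (b ⊗ₜ[k] h))
        = LinearMap.rTensor A (LinearMap.mulRight k h) (coact b) := by
    intro b h
    obtain ⟨p, h1, h2, hh⟩ := myexists_rep2 (W.comul h)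
    obtain ⟨N, b1, b0, hb⟩ := myexists_rep2 (coact b)
    obtain ⟨K, c1, c0, hc⟩ := myexists_rep2_family (fun i => coact (act (t1 i) b))
    rw [hlamsm b h nT nt p K T1 T2 T3 t1 t2 t3 h1 h2 c1 c0 hT ht hh hc]
    have S1 : ∀ (C : H) (D : A),
        ∑ j, W.counit (h2 j) • ((C * h1 j) ⊗ₜ[k] D) = (C * h) ⊗ₜ[k] D := by
      intro C D
      have := mysum_smul_map (g := (TensorProduct.mk k H A).flip D ∘ₗ LinearMap.mulLeft k C)
        (fun j => W.counit (h2 j)) h1 (hCc h p h1 h2 hh)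
      simpa using this
    have S2 : ∀ i : Fin nT,
        ∑ i', W.counit (t3 i') •
            ∑ r, (T1 i * c1 i' r * t2 i' * h) ⊗ₜ[k] act (T2 i) (c0 i' r)
          = ∑ q, (T1 i * b1 q * h) ⊗ₜ[k] act (T2 i) (b0 q) := by
      intro i
      have hcol := mysum_smul_map (g := TensorProduct.lift (LinearMap.mk₂ k
          (fun U V => (TensorProduct.map
              (LinearMap.mulLeft k (T1 i) ∘ₗ LinearMap.mulRight k (V * h)) (act (T2 i)))
            (coact (act U b)))
          (by intro m₁ m₂ n; simp [map_add, LinearMap.add_apply])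
          (by intro c m n; simp [map_smul, LinearMap.smul_apply])
          (by intro m n₁ n₂;
              simp [add_mul, mymulRight_add, LinearMap.comp_add,
                TensorProduct.map_add_left, LinearMap.add_apply])
          (by intro c m n;
              simp [smul_mul_assoc, mymulRight_smul, LinearMap.comp_smul,
                TensorProduct.map_smul_left, LinearMap.smul_apply])))
        (fun i' => W.counit (t3 i')) (fun i' => t1 i' ⊗ₜ[k] t2 i') (hC2 nt t1 t2 t3 ht)
      refine (Finset.sum_congr rfl fun i' _ => ?_).trans (hcol.trans ?_)
      · congr 1
        rw [TensorProduct.lift.tmul, LinearMap.mk₂_apply, hc i', map_sum]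
        exact Finset.sum_congr rfl fun r _ => by simp [mul_assoc]
      · rw [Algebra.TensorProduct.one_def, TensorProduct.lift.tmul, LinearMap.mk₂_apply,
          hact_one, hb, map_sum]
        exact Finset.sum_congr rfl fun q _ => by simp [mul_assoc]
    have S3 : ∑ i, W.counit (T3 i) •
          ∑ q, (T1 i * b1 q * h) ⊗ₜ[k] act (T2 i) (b0 q)
        = ∑ q, (b1 q * h) ⊗ₜ[k] b0 q := by
      have hcol := mysum_smul_map (g := TensorProduct.lift (LinearMap.mk₂ k
          (fun U V => ∑ q, (U * (b1 q * h)) ⊗ₜ[k] act V (b0 q))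
          (by intro m₁ m₂ n; simp [add_mul, TensorProduct.add_tmul, Finset.sum_add_distrib])
          (by intro c m n; simp [smul_mul_assoc, TensorProduct.smul_tmul', Finset.smul_sum])
          (by intro m n₁ n₂; simp [map_add, LinearMap.add_apply, TensorProduct.tmul_add,
            Finset.sum_add_distrib])
          (by intro c m n; simp [map_smul, LinearMap.smul_apply, TensorProduct.tmul_smul,
            Finset.smul_sum])))
        (fun i => W.counit (T3 i)) (fun i => T1 i ⊗ₜ[k] T2 i) (hC1 nT T1 T2 T3 hT)
      refine (Finset.sum_congr rfl fun i _ => ?_).trans (hcol.trans ?_)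
      · congr 1
        rw [TensorProduct.lift.tmul, LinearMap.mk₂_apply]
        exact Finset.sum_congr rfl fun q _ => by simp [mul_assoc]
      · rw [Algebra.TensorProduct.one_def, TensorProduct.lift.tmul, LinearMap.mk₂_apply]
        exact Finset.sum_congr rfl fun q _ => by simp [hact_one]
    rw [hb, map_sum]
    simp only [map_sum, LinearMap.lTensor_tmul, piMap_tmul, TensorProduct.tmul_smul,
      LinearMap.rTensor_tmul, LinearMap.mulRight_apply]
    rw [← S3]
    refine Finset.sum_congr rfl fun i _ => ?_
    rw [← S2 i, Finset.smul_sum]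
    refine Finset.sum_congr rfl fun i' _ => ?_
    rw [smul_smul, Finset.smul_sum]
    refine Finset.sum_congr rfl fun r _ => ?_
    rw [← S1 (T1 i * c1 i' r * t2 i') (act (T2 i) (c0 i' r)), Finset.smul_sum]
    refine Finset.sum_congr rfl fun j _ => ?_
    rw [smul_smul, W.counit_mul, W.counit_mul]
  -- unit coaction
  have hone : coact oneA = (1 : H) ⊗ₜ[k] oneA := by
    have h1 := hB' oneA 1
    rw [hlam_one] at h1
    simpa [W.counit_one, LinearMap.mulRight_one, LinearMap.rTensor_id] using h1.symm
  -- `(id ⊗ ε)` applied to the smash multiplication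
  have hπmsm : ∀ (u v : A) (s w : H),
      _root_.piMap W.counit (msm (u ⊗ₜ[k] s) (v ⊗ₜ[k] w))
        = W.counit w • mulA u (act s v) := by
    intro u v s w
    obtain ⟨p, s1, s2, hs⟩ := myexists_rep2 (W.comul s)
    rw [hmsm u v s w nt p t1 t2 t3 s1 s2 ht hs]
    simp only [map_sum, piMap_tmul]
    have inner : ∀ i : Fin nt, ∑ j, W.counit (s2 j) •
        mulA (act (t1 i) u) (act (t2 i * s1 j) v)
        = mulA (act (t1 i) u) (act (t2 i * s) v) := by
      intro i
      have := mysum_smul_map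
        (g := mulA (act (t1 i) u) ∘ₗ act.flip v ∘ₗ LinearMap.mulLeft k (t2 i))
        (fun j => W.counit (s2 j)) s1 (hCc s p s1 s2 hs)
      simpa using this
    have key : ∑ i, W.counit (t3 i) •
        ∑ j, W.counit (s2 j) • mulA (act (t1 i) u) (act (t2 i * s1 j) v)
        = mulA u (act s v) := by
      have hcol := mysum_smul_map (g := TensorProduct.lift (LinearMap.mk₂ k
          (fun U V => mulA (act U u) (act (V * s) v))
          (by intro m₁ m₂ n; simp [map_add, LinearMap.add_apply])
          (by intro c m n; simp [map_smul, LinearMap.smul_apply])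
          (by intro m n₁ n₂; simp [add_mul, map_add, LinearMap.add_apply])
          (by intro c m n; simp [smul_mul_assoc, map_smul, LinearMap.smul_apply])))
        (fun i => W.counit (t3 i)) (fun i => t1 i ⊗ₜ[k] t2 i) (hC2 nt t1 t2 t3 ht)
      refine (Finset.sum_congr rfl fun i _ => ?_).trans (hcol.trans ?_)
      · rw [inner i, TensorProduct.lift.tmul, LinearMap.mk₂_apply]
      · rw [Algebra.TensorProduct.one_def, TensorProduct.lift.tmul, LinearMap.mk₂_apply,
          hact_one, one_mul]
    rw [← key, Finset.smul_sum]
    refine Finset.sum_congr rfl fun i _ => ?_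
    rw [smul_smul, Finset.smul_sum]
    refine Finset.sum_congr rfl fun j _ => ?_
    rw [smul_smul, W.counit_mul, W.counit_mul]
    congr 1
    ring
  -- the first way of computing `(id ⊗ (id ⊗ ε)) (λ ((a # 1)(a' # 1)))`
  have hstar : ∀ (a a' : A) (ns : ℕ) (s1 s2 s3 : Fin ns → H),
      W.assoc3Inv = ∑ j, (s1 j ⊗ₜ[k] s2 j) ⊗ₜ[k] s3 j →
      (LinearMap.lTensor H (_root_.piMap W.counit))
          (lamsm (msm (a ⊗ₜ[k] (1 : H)) (a' ⊗ₜ[k] (1 : H))))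
        = ∑ j, LinearMap.rTensor A (LinearMap.mulRight k (s3 j))
            (coact (mulA (act (s1 j) a) (act (s2 j) a'))) := by
    intro a a' ns s1 s2 s3 hsrep
    rw [hmsm a a' 1 1 ns 1 s1 s2 s3 (fun _ => 1) (fun _ => 1) hsrep hcomul1]
    simp only [map_sum, Fin.sum_univ_one, mul_one]
    exact Finset.sum_congr rfl fun j _ => hB' _ _
  -- the second way, using that `λ` is an algebra map
  have hXi2 : ∀ (a a' : A) (nS ns K N : ℕ) (S1 S2 S3 : Fin nS → H) (s1 s2 s3 : Fin ns → H)
      (c1 : Fin ns → Fin K → H) (c0 : Fin ns → Fin K → A)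
      (e1 : Fin N → H) (e0 : Fin N → A),
      W.assoc3 = ∑ i, (S1 i ⊗ₜ[k] S2 i) ⊗ₜ[k] S3 i →
      W.assoc3Inv = ∑ j, (s1 j ⊗ₜ[k] s2 j) ⊗ₜ[k] s3 j →
      (∀ j, coact (act (s1 j) a) = ∑ r, c1 j r ⊗ₜ[k] c0 j r) →
      coact a' = ∑ q, e1 q ⊗ₜ[k] e0 q →
      (LinearMap.lTensor H (_root_.piMap W.counit))
          (lamsm (msm (a ⊗ₜ[k] (1 : H)) (a' ⊗ₜ[k] (1 : H))))
        = ∑ i, ∑ j, ∑ r, ∑ q, (S1 i * c1 j r * s2 j * e1 q) ⊗ₜ[k]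
            mulA (act (S2 i) (c0 j r)) (act (S3 i * s3 j) (e0 q)) := by
    intro a a' nS ns K N S1 S2 S3 s1 s2 s3 c1 c0 e1 e0 hS hs hc he
    obtain ⟨L, d1, d0, hd⟩ := myexists_rep2_family (fun l' => coact (act (t1 l') a'))
    rw [hlam_alg]
    rw [hlamsm a 1 nS ns 1 K S1 S2 S3 s1 s2 s3 (fun _ => 1) (fun _ => 1) c1 c0 hS hs
        hcomul1 hc,
      hlamsm a' 1 nT nt 1 L T1 T2 T3 t1 t2 t3 (fun _ => 1) (fun _ => 1) d1 d0 hT ht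
        hcomul1 hd]
    simp only [Fin.sum_univ_one, mul_one, TensorProduct.sum_tmul, TensorProduct.tmul_sum,
      map_sum, TensorProduct.tensorTensorTensorComm_tmul, TensorProduct.map_tmul,
      LinearMap.mul'_apply, TensorProduct.lift.tmul, LinearMap.lTensor_tmul, hπmsm,
      TensorProduct.tmul_smul]
    have inner1 : ∀ (α : H) (u : A) (s : H) (l : Fin nT),
        ∑ l', W.counit (t3 l') • ∑ q,
            (α * (T1 l * d1 l' q * t2 l')) ⊗ₜ[k] mulA u (act s (act (T2 l) (d0 l' q)))
          = ∑ q, (α * (T1 l * e1 q)) ⊗ₜ[k] mulA u (act s (act (T2 l) (e0 q))) := by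
      intro α u s l
      have hcol := mysum_smul_map (g := TensorProduct.lift (LinearMap.mk₂ k
          (fun U V => (TensorProduct.map
              (LinearMap.mulLeft k (α * T1 l) ∘ₗ LinearMap.mulRight k V)
              (mulA u ∘ₗ act s ∘ₗ act (T2 l)))
            (coact (act U a')))
          (by intro m₁ m₂ n; simp [map_add, LinearMap.add_apply])
          (by intro c m n; simp [map_smul, LinearMap.smul_apply])
          (by intro m n₁ n₂;
              simp [mymulRight_add, LinearMap.comp_add,
                TensorProduct.map_add_left, LinearMap.add_apply])
          (by intro c m n;
              simp [mymulRight_smul, LinearMap.comp_smul,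
                TensorProduct.map_smul_left, LinearMap.smul_apply])))
        (fun l' => W.counit (t3 l')) (fun l' => t1 l' ⊗ₜ[k] t2 l') (hC2 nt t1 t2 t3 ht)
      refine (Finset.sum_congr rfl fun l' _ => ?_).trans (hcol.trans ?_)
      · congr 1
        rw [TensorProduct.lift.tmul, LinearMap.mk₂_apply, hd l', map_sum]
        exact Finset.sum_congr rfl fun q _ => by simp [mul_assoc]
      · rw [Algebra.TensorProduct.one_def, TensorProduct.lift.tmul, LinearMap.mk₂_apply,
          hact_one, he, map_sum]
        exact Finset.sum_congr rfl fun q _ => by simp [mul_assoc]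
    have inner2 : ∀ (α : H) (u : A) (s : H),
        ∑ l, W.counit (T3 l) • ∑ q,
            (α * (T1 l * e1 q)) ⊗ₜ[k] mulA u (act s (act (T2 l) (e0 q)))
          = ∑ q, (α * e1 q) ⊗ₜ[k] mulA u (act s (e0 q)) := by
      intro α u s
      have hcol := mysum_smul_map (g := TensorProduct.lift (LinearMap.mk₂ k
          (fun U V => ∑ q, (α * (U * e1 q)) ⊗ₜ[k] mulA u (act s (act V (e0 q))))
          (by intro m₁ m₂ n;
              simp [add_mul, mul_add, TensorProduct.add_tmul, Finset.sum_add_distrib])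
          (by intro c m n;
              simp [smul_mul_assoc, mul_smul_comm, TensorProduct.smul_tmul', Finset.smul_sum])
          (by intro m n₁ n₂; simp [map_add, LinearMap.add_apply, TensorProduct.tmul_add,
            Finset.sum_add_distrib])
          (by intro c m n; simp [map_smul, LinearMap.smul_apply, TensorProduct.tmul_smul,
            Finset.smul_sum])))
        (fun l => W.counit (T3 l)) (fun l => T1 l ⊗ₜ[k] T2 l) (hC1 nT T1 T2 T3 hT)
      refine (Finset.sum_congr rfl fun l _ => ?_).trans (hcol.trans ?_)
      · rw [TensorProduct.lift.tmul, LinearMap.mk₂_apply]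
      · rw [Algebra.TensorProduct.one_def, TensorProduct.lift.tmul, LinearMap.mk₂_apply]
        exact Finset.sum_congr rfl fun q _ => by simp [hact_one]
    have move : ∀ {n₀ : ℕ} (G : Fin n₀ → Fin nS → Fin ns → Fin K → H ⊗[k] A),
        (∑ x, ∑ i, ∑ j, ∑ r, G x i j r) = ∑ i, ∑ j, ∑ r, ∑ x, G x i j r := by
      intro n₀ G
      rw [Finset.sum_comm]
      exact Finset.sum_congr rfl fun i _ => by
        rw [Finset.sum_comm]
        exact Finset.sum_congr rfl fun j _ => Finset.sum_comm
    refine Eq.trans (Finset.sum_congr rfl fun l _ =>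
      Finset.sum_congr rfl fun l' _ => move _) ?_
    refine Eq.trans (Finset.sum_congr rfl fun l _ => move _) ?_
    refine Eq.trans (move _) ?_
    refine Finset.sum_congr rfl fun i _ => Finset.sum_congr rfl fun j _ =>
      Finset.sum_congr rfl fun r _ => ?_
    rw [← inner2 (S1 i * c1 j r * s2 j) (act (S2 i) (c0 j r)) (S3 i * s3 j)]
    refine Finset.sum_congr rfl fun l _ => ?_
    rw [← inner1 (S1 i * c1 j r * s2 j) (act (S2 i) (c0 j r)) (S3 i * s3 j) l,
      Finset.smul_sum]
    refine Finset.sum_congr rfl fun l' _ => ?_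
    rw [smul_smul, ← W.counit_mul, Finset.smul_sum]
  -- final assembly
  refine ⟨hone, ?_⟩
  intro a a' nX nx nY K L X1 X2 X3 x1 x2 x3 Y1 Y2 Y3 c1 c0 d1 d0 hX hx hY hc hd
  have hone3 : ∑ jl : Fin nx × Fin nY,
      ((x1 jl.1 * Y1 jl.2) ⊗ₜ[k] (x2 jl.1 * Y2 jl.2)) ⊗ₜ[k] (x3 jl.1 * Y3 jl.2)
        = (1 : (H ⊗[k] H) ⊗[k] H) := by
    rw [Fintype.sum_prod_type]
    calc ∑ j, ∑ l, ((x1 j * Y1 l) ⊗ₜ[k] (x2 j * Y2 l)) ⊗ₜ[k] (x3 j * Y3 l)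
        = (∑ j, (x1 j ⊗ₜ[k] x2 j) ⊗ₜ[k] x3 j) * (∑ l, (Y1 l ⊗ₜ[k] Y2 l) ⊗ₜ[k] Y3 l) := by
          rw [Finset.sum_mul_sum]
          exact Finset.sum_congr rfl fun j _ => Finset.sum_congr rfl fun l _ => by
            simp [Algebra.TensorProduct.tmul_mul_tmul]
      _ = W.assoc3Inv * W.assoc3 := by rw [← hx, ← hY]
      _ = 1 := W.inv_mul_assoc3
  have hkey := mysum_map
    (TensorProduct.lift (LinearMap.mk₂ k
      (fun (m : H ⊗[k] H) (w : H) => LinearMap.rTensor A (LinearMap.mulRight k w)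
        (coact ((TensorProduct.lift (LinearMap.mk₂ k
          (fun u v => mulA (act u a) (act v a'))
          (by intro m₁ m₂ n; simp [map_add, LinearMap.add_apply])
          (by intro c m n; simp [map_smul, LinearMap.smul_apply])
          (by intro m n₁ n₂; simp [map_add, LinearMap.add_apply])
          (by intro c m n; simp [map_smul, LinearMap.smul_apply]))) m)))
      (by intro m₁ m₂ n; simp [map_add])
      (by intro c m n; simp [map_smul])
      (by intro m n₁ n₂; simp [mymulRight_add, LinearMap.rTensor_add, LinearMap.add_apply])
      (by intro c m n; simp [mymulRight_smul, LinearMap.rTensor_smul, LinearMap.smul_apply])))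
    (fun jl : Fin nx × Fin nY =>
      ((x1 jl.1 * Y1 jl.2) ⊗ₜ[k] (x2 jl.1 * Y2 jl.2)) ⊗ₜ[k] (x3 jl.1 * Y3 jl.2))
    hone3
  simp only [Algebra.TensorProduct.one_def, TensorProduct.lift.tmul, LinearMap.mk₂_apply,
    hact_one, LinearMap.mulRight_one, LinearMap.rTensor_id, LinearMap.id_coe,
    id_eq] at hkey
  rw [← hkey]
  simp only [Fintype.sum_prod_type]
  calc ∑ j, ∑ l, LinearMap.rTensor A (LinearMap.mulRight k (x3 j * Y3 l))
        (coact (mulA (act (x1 j * Y1 l) a) (act (x2 j * Y2 l) a')))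
      = ∑ l, ∑ j, LinearMap.rTensor A (LinearMap.mulRight k (Y3 l))
          (LinearMap.rTensor A (LinearMap.mulRight k (x3 j))
            (coact (mulA (act (x1 j) (act (Y1 l) a)) (act (x2 j) (act (Y2 l) a'))))) := by
        rw [Finset.sum_comm]
        refine Finset.sum_congr rfl fun l _ => Finset.sum_congr rfl fun j _ => ?_
        rw [hact_mul, hact_mul, LinearMap.mulRight_mul, LinearMap.rTensor_comp,
          LinearMap.comp_apply]
    _ = ∑ l, LinearMap.rTensor A (LinearMap.mulRight k (Y3 l))
          ((LinearMap.lTensor H (_root_.piMap W.counit))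
            (lamsm (msm (act (Y1 l) a ⊗ₜ[k] (1 : H)) (act (Y2 l) a' ⊗ₜ[k] (1 : H))))) := by
        refine Finset.sum_congr rfl fun l _ => ?_
        rw [← map_sum, hstar (act (Y1 l) a) (act (Y2 l) a') nx x1 x2 x3 hx]
    _ = ∑ l, LinearMap.rTensor A (LinearMap.mulRight k (Y3 l))
          (∑ i, ∑ j, ∑ r, ∑ s, (X1 i * c1 j l r * x2 j * d1 l s) ⊗ₜ[k]
            mulA (act (X2 i) (c0 j l r)) (act (X3 i * x3 j) (d0 l s))) := by
        refine Finset.sum_congr rfl fun l _ => ?_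
        rw [hXi2 (act (Y1 l) a) (act (Y2 l) a') nX nx K L X1 X2 X3 x1 x2 x3
          (fun j r => c1 j l r) (fun j r => c0 j l r) (fun s => d1 l s) (fun s => d0 l s)
          hX hx (fun j => by rw [← hact_mul]; exact hc j l) (hd l)]
    _ = ∑ i, ∑ j, ∑ l, ∑ r, ∑ s, (X1 i * c1 j l r * x2 j * d1 l s * Y3 l) ⊗ₜ[k]
          mulA (act (X2 i) (c0 j l r)) (act (X3 i * x3 j) (d0 l s)) := by
        simp only [map_sum, LinearMap.rTensor_tmul, LinearMap.mulRight_apply]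
        rw [Finset.sum_comm]
        exact Finset.sum_congr rfl fun i _ => Finset.sum_comm
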